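/- (Theorem 1, finite-state form.) Suppose Ψ(x₀, 0) > 1 - ε, and suppose that for every t < H and every x ∈ X the safety condition ∑_{x'} ((κ̂ t x) x').toReal · Ψ(x', t+1) ≥ Ψ(x, t) holds, where κ̂ is the absorbing closed-loop kernel of the deterministic online policy π̂. Then for every t ≤ H one has ∑_{x} ((ν t) x).toReal · Ψ(x, t) ≥ 1 - ε, where ν t is the time-t marginal of the online π̂-driven chain started at x₀. In particular, the probability under the switched policy (π̂ on times before t, π on times from t onward) that X_τ ∈ C for all t ≤ τ ≤ H is at least 1 - ε. -/

import Mathlib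

open scoped BigOperators

/-- Trajectory distribution of the time-dependent kernel `κ` started at state `x` at time `t`,
run for `n` further steps: a PMF on functions `Fin (n+1) → X` recording `X_t, ..., X_{t+n}`,
with `X_t = x` and `X_{s+1} ~ κ s (X_s)` sampled via iterated `PMF.bind`. -/
noncomputable def traj {X : Type*} (κ : ℕ → X → PMF X) : ℕ → (n : ℕ) → X → PMF (Fin (n + 1) → X)
  | _, 0, x => PMF.pure fun _ => x
  | t, n + 1, x => (κ t x).bind fun x' => (traj κ (t + 1) n x').map (Fin.cons x)

/-- Safe probability `Ψ_κ(x, t)`: the probability, under the trajectory distribution of `κ`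
started at `x` at time `t` over horizon `H`, that every state of the trajectory lies in the
safe set `C`. -/
noncomputable def safeProb {X : Type*} [Fintype X] [DecidableEq X]
    (C : Set X) [DecidablePred (· ∈ C)] (κ : ℕ → X → PMF X) (H t : ℕ) (x : X) : ℝ :=
  ∑ f : Fin (H - t + 1) → X,
    if ∀ i : Fin (H - t + 1), f i ∈ C then ((traj κ t (H - t) x) f).toReal else 0

/-- marginal after `t` steps of kernel `κ` started at time `a` in state `x`. -/
noncomputable def marg {X : Type*} (κ : ℕ → X → PMF X) : ℕ → ℕ → X → PMF X
  | _, 0, x => PMF.pure x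
  | a, t + 1, x => (κ a x).bind (marg κ (a + 1) t)

lemma map_cons_apply {X : Type*} [DecidableEq X] {n : ℕ}
    (p : PMF (Fin (n + 1) → X)) (x : X) (f : Fin (n + 2) → X) :
    (p.map (Fin.cons x)) f = if f 0 = x then p (Fin.tail f) else 0 := by
  rw [PMF.map_apply]
  split_ifs with h
  · rw [tsum_eq_single (Fin.tail f)]
    · rw [if_pos]
      rw [← h, Fin.cons_self_tail]
    · intro g hg
      rw [if_neg]
      intro hfg
      exact hg (by rw [hfg, Fin.tail_cons])
  · convert tsum_zero with g
    rw [if_neg]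
    intro hfg
    exact h (by rw [hfg, Fin.cons_zero])

lemma traj_succ_apply {X : Type*} [Fintype X] [DecidableEq X] (κ : ℕ → X → PMF X)
    (a n : ℕ) (x : X) (f : Fin (n + 2) → X) :
    traj κ a (n + 1) x f
      = ∑ x' : X, κ a x x' * (if f 0 = x then traj κ (a + 1) n x' (Fin.tail f) else 0) := by
  show ((κ a x).bind _) f = _
  rw [PMF.bind_apply, tsum_fintype]
  refine Finset.sum_congr rfl fun x' _ => ?_
  rw [map_cons_apply]

/-- one-step expectation decomposition. -/
lemma traj_succ_exp {X : Type*} [Fintype X] [DecidableEq X] (κ : ℕ → X → PMF X)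
    (a n : ℕ) (x : X) (φ : (Fin (n + 2) → X) → ENNReal) :
    ∑ f : Fin (n + 2) → X, traj κ a (n + 1) x f * φ f
      = ∑ x' : X, κ a x x' *
          ∑ g : Fin (n + 1) → X, traj κ (a + 1) n x' g * φ (Fin.cons x g) := by
  calc ∑ f : Fin (n + 2) → X, traj κ a (n + 1) x f * φ f
      = ∑ f : Fin (n + 2) → X, ∑ x' : X,
          κ a x x' * (if f 0 = x then traj κ (a + 1) n x' (Fin.tail f) else 0) * φ f := by
        refine Finset.sum_congr rfl fun f _ => ?_
        rw [traj_succ_apply, Finset.sum_mul]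
    _ = ∑ x' : X, ∑ f : Fin (n + 2) → X,
          κ a x x' * (if f 0 = x then traj κ (a + 1) n x' (Fin.tail f) else 0) * φ f :=
        Finset.sum_comm
    _ = ∑ x' : X, ∑ p : X × (Fin (n + 1) → X),
          κ a x x' * (if p.1 = x then traj κ (a + 1) n x' p.2 else 0) * φ (Fin.cons p.1 p.2) := by
        refine Finset.sum_congr rfl fun x' _ => ?_
        rw [← ((Fin.consEquiv (fun _ : Fin (n + 2) => X)).sum_comp
          (fun f : Fin (n + 2) → X =>
            κ a x x' * (if f 0 = x then traj κ (a + 1) n x' (Fin.tail f) else 0) * φ f))]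
        refine Finset.sum_congr rfl fun p _ => ?_
        simp [Fin.consEquiv]
    _ = ∑ x' : X, κ a x x' * ∑ g : Fin (n + 1) → X, traj κ (a + 1) n x' g * φ (Fin.cons x g) := by
        refine Finset.sum_congr rfl fun x' _ => ?_
        rw [Fintype.sum_prod_type, Finset.mul_sum]
        rw [Finset.sum_eq_single x]
        · refine Finset.sum_congr rfl fun g _ => ?_
          rw [if_pos rfl]
          ring
        · intro b _ hb
          apply Finset.sum_eq_zero
          intro g _
          rw [if_neg hb, mul_zero, zero_mul]
        · intro hx; exact absurd (Finset.mem_univ x) hx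

lemma traj_congr {X : Type*} (κ κ' : ℕ → X → PMF X) :
    ∀ (n a : ℕ) (x : X), (∀ s, a ≤ s → κ s = κ' s) → traj κ a n x = traj κ' a n x := by
  intro n
  induction n with
  | zero => intro a x _; rfl
  | succ n ih =>
      intro a x h
      show (κ a x).bind _ = (κ' a x).bind _
      rw [h a le_rfl]
      congr 1
      funext x'
      rw [ih (a + 1) x' (fun s hs => h s (by omega))]

lemma marg_congr {X : Type*} (κ κ' : ℕ → X → PMF X) :
    ∀ (t a : ℕ) (x : X), (∀ s, a ≤ s → s < a + t → κ s = κ' s) → marg κ a t x = marg κ' a t x := by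
  intro t
  induction t with
  | zero => intro a x _; rfl
  | succ t ih =>
      intro a x h
      show (κ a x).bind _ = (κ' a x).bind _
      rw [h a le_rfl (by omega)]
      congr 1
      funext x'
      exact ih (a + 1) x' (fun s hs hs' => h s (by omega) (by omega))

lemma marg_snoc {X : Type*} (κ : ℕ → X → PMF X) :
    ∀ (t a : ℕ) (x : X), marg κ a (t + 1) x = (marg κ a t x).bind (fun y => κ (a + t) y) := by
  intro t
  induction t with
  | zero =>
      intro a x
      show (κ a x).bind _ = (PMF.pure x).bind _
      rw [PMF.pure_bind]
      simp only [Nat.add_zero]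
      exact PMF.bind_pure (κ a x)
  | succ t ih =>
      intro a x
      show (κ a x).bind (marg κ (a + 1) (t + 1)) = _
      have : marg κ (a + 1) (t + 1) = fun x' => (marg κ (a + 1) t x').bind (fun y => κ (a + 1 + t) y) := by
        funext x'; exact ih (a + 1) x'
      rw [this]
      rw [← PMF.bind_bind]
      show ((κ a x).bind (marg κ (a + 1) t)).bind _ = (marg κ a (t + 1) x).bind _
      have h2 : a + 1 + t = a + (t + 1) := by omega
      rw [h2]
      rfl

lemma traj_apply_ne_start {X : Type*} [Fintype X] [DecidableEq X] (κ : ℕ → X → PMF X) :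
    ∀ (n a : ℕ) (x : X) (f : Fin (n + 1) → X), f 0 ≠ x → traj κ a n x f = 0 := by
  intro n
  cases n with
  | zero =>
      intro a x f h
      show (PMF.pure _) f = 0
      rw [PMF.pure_apply, if_neg]
      intro hf
      exact h (by rw [hf])
  | succ n =>
      intro a x f h
      rw [traj_succ_apply]
      apply Finset.sum_eq_zero
      intro x' _
      rw [if_neg h, mul_zero]

lemma safeProb_eq_zero {X : Type*} [Fintype X] [DecidableEq X]
    (C : Set X) [DecidablePred (· ∈ C)] (κ : ℕ → X → PMF X) (H t : ℕ) (x : X)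
    (hx : x ∉ C) : safeProb C κ H t x = 0 := by
  unfold safeProb
  apply Finset.sum_eq_zero
  intro f _
  split_ifs with h
  · rw [traj_apply_ne_start]
    · simp
    · intro hf
      exact hx (hf ▸ h 0)
  · rfl

/-- ENNReal-valued safe expectation. -/
noncomputable def safeE {X : Type*} [Fintype X] [DecidableEq X]
    (C : Set X) [DecidablePred (· ∈ C)] (κ : ℕ → X → PMF X) (H t : ℕ) (x : X) : ENNReal :=
  ∑ f : Fin (H - t + 1) → X,
    traj κ t (H - t) x f * (if ∀ i : Fin (H - t + 1), f i ∈ C then 1 else 0)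

lemma safeE_ne_top {X : Type*} [Fintype X] [DecidableEq X]
    (C : Set X) [DecidablePred (· ∈ C)] (κ : ℕ → X → PMF X) (H t : ℕ) (x : X) :
    safeE C κ H t x ≠ ⊤ := by
  rw [safeE, ENNReal.sum_ne_top]
  intro f _
  exact ENNReal.mul_ne_top (PMF.apply_ne_top _ _) (by split_ifs <;> simp)

lemma safeE_toReal {X : Type*} [Fintype X] [DecidableEq X]
    (C : Set X) [DecidablePred (· ∈ C)] (κ : ℕ → X → PMF X) (H t : ℕ) (x : X) :
    (safeE C κ H t x).toReal = safeProb C κ H t x := by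
  rw [safeE, safeProb, ENNReal.toReal_sum]
  · refine Finset.sum_congr rfl fun f _ => ?_
    split_ifs with h
    · rw [mul_one]
    · rw [mul_zero, ENNReal.toReal_zero]
  · intro f _
    exact ENNReal.mul_ne_top (PMF.apply_ne_top _ _) (by split_ifs <;> simp)

lemma sum_mul_sum_comm {X Y : Type*} [Fintype X] [Fintype Y]
    (c : X → ENNReal) (m : X → Y → ENNReal) (E : Y → ENNReal) :
    ∑ x : X, c x * ∑ y : Y, m x y * E y = ∑ y : Y, (∑ x : X, c x * m x y) * E y := by
  simp_rw [Finset.mul_sum, Finset.sum_mul, mul_assoc]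
  exact Finset.sum_comm

/-- marginalization / splitting lemma. -/
lemma traj_split {X : Type*} [Fintype X] [DecidableEq X]
    (C : Set X) [DecidablePred (· ∈ C)] (κ : ℕ → X → PMF X) :
    ∀ (t n a : ℕ) (x : X), t ≤ n →
    ∑ f : Fin (n + 1) → X,
        traj κ a n x f * (if ∀ i : Fin (n + 1), t ≤ (i : ℕ) → f i ∈ C then 1 else 0)
      = ∑ y : X, marg κ a t x y *
          ∑ g : Fin (n - t + 1) → X,
            traj κ (a + t) (n - t) y g * (if ∀ i : Fin (n - t + 1), g i ∈ C then 1 else 0) := by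
  intro t
  induction t with
  | zero =>
      intro n a x _
      simp only [Nat.sub_zero, Nat.add_zero, Nat.zero_le, true_implies]
      rw [Finset.sum_eq_single x]
      · show _ = (PMF.pure x) x * _
        rw [PMF.pure_apply, if_pos rfl, one_mul]
      · intro y _ hy
        show (PMF.pure x) y * _ = 0
        rw [PMF.pure_apply, if_neg hy, zero_mul]
      · intro hx; exact absurd (Finset.mem_univ x) hx
  | succ t ih =>
      intro n a x h
      obtain ⟨n', rfl⟩ : ∃ n', n = n' + 1 := ⟨n - 1, by omega⟩
      rw [show n' + 1 - (t + 1) = n' - t from Nat.succ_sub_succ n' t]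
      rw [traj_succ_exp]
      have hind : ∀ g : Fin (n' + 1) → X,
          (if ∀ i : Fin (n' + 2), t + 1 ≤ (i : ℕ) → (Fin.cons x g : Fin (n' + 2) → X) i ∈ C then (1 : ENNReal) else 0)
            = (if ∀ i : Fin (n' + 1), t ≤ (i : ℕ) → g i ∈ C then 1 else 0) := by
        intro g
        congr 1
        apply propext
        constructor
        · intro hall j hj
          have := hall j.succ (by simp [Fin.val_succ]; omega)
          rwa [Fin.cons_succ] at this
        · intro hall i
          refine Fin.cases ?_ ?_ i
          · intro h0
            simp only [Fin.val_zero] at h0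
            omega
          · intro j hj'
            rw [Fin.cons_succ]
            apply hall
            simp only [Fin.val_succ] at hj'
            omega
      have hIH : ∀ x' : X,
          ∑ g : Fin (n' + 1) → X,
            traj κ (a + 1) n' x' g * (if ∀ i : Fin (n' + 1), t ≤ (i : ℕ) → g i ∈ C then 1 else 0)
          = ∑ y : X, marg κ (a + 1) t x' y *
              ∑ g : Fin (n' - t + 1) → X,
                traj κ (a + 1 + t) (n' - t) y g *
                  (if ∀ i : Fin (n' - t + 1), g i ∈ C then 1 else 0) :=
        fun x' => ih n' (a + 1) x' (by omega)
      calc ∑ x' : X, κ a x x' *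
              ∑ g : Fin (n' + 1) → X, traj κ (a + 1) n' x' g *
                (if ∀ i : Fin (n' + 2), t + 1 ≤ (i : ℕ) → (Fin.cons x g : Fin (n' + 2) → X) i ∈ C then 1 else 0)
          = ∑ x' : X, κ a x x' *
              ∑ y : X, marg κ (a + 1) t x' y *
                ∑ g : Fin (n' - t + 1) → X,
                  traj κ (a + 1 + t) (n' - t) y g *
                    (if ∀ i : Fin (n' - t + 1), g i ∈ C then 1 else 0) := by
            refine Finset.sum_congr rfl fun x' _ => ?_
            congr 1
            rw [← hIH x']
            refine Finset.sum_congr rfl fun g _ => ?_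
            rw [hind g]
        _ = ∑ y : X, (∑ x' : X, κ a x x' * marg κ (a + 1) t x' y) *
                ∑ g : Fin (n' - t + 1) → X,
                  traj κ (a + 1 + t) (n' - t) y g *
                    (if ∀ i : Fin (n' - t + 1), g i ∈ C then 1 else 0) := by
            exact sum_mul_sum_comm (fun x' => κ a x x') (fun x' y => marg κ (a + 1) t x' y) _
        _ = ∑ y : X, marg κ a (t + 1) x y *
                ∑ g : Fin (n' - t + 1) → X,
                  traj κ (a + (t + 1)) (n' - t) y g *
                    (if ∀ i : Fin (n' - t + 1), g i ∈ C then 1 else 0) := by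
            refine Finset.sum_congr rfl fun y _ => ?_
            have h1 : marg κ a (t + 1) x y = ∑ x' : X, κ a x x' * marg κ (a + 1) t x' y := by
              show ((κ a x).bind _) y = _
              rw [PMF.bind_apply, tsum_fintype]
            have h2 : a + 1 + t = a + (t + 1) := by omega
            rw [h1, h2]

/-- **Theorem 1 (finite-state form).** If the initial long-term safe probability exceeds
`1 - ε` and every executed action of the deterministic online policy `π̂` satisfies the
Q-style invariance condition through the absorbing closed-loop kernel `κ̂`, then the expected
safe probability `∑ x, ν t x · Ψ(x, t)` stays at least `1 - ε` at all times `t ≤ H`; in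
particular, the probability under the switched policy (`π̂` before time `t`, `π` from time `t`
on) that the state is safe at all times `τ` with `t ≤ τ ≤ H` is at least `1 - ε`. -/
theorem finite_state_safety_certificate
    {X : Type*} [Fintype X] [Nonempty X] [DecidableEq X]
    {U : Type*} [Fintype U] [Nonempty U]
    (C : Set X) [DecidablePred (· ∈ C)] (H : ℕ)
    (P : X → U → PMF X) (ε : ℝ) (x₀ : X)
    (π : ℕ → X → PMF U) (πhat : ℕ → X → U)
    -- closed-loop kernel of the stochastic policy π
    (κπ : ℕ → X → PMF X) (hκπ : ∀ s x, κπ s x = (π s x).bind fun u => P x u)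
    -- time-t marginals of the online π̂-driven chain started at x₀
    (ν : ℕ → PMF X) (hν0 : ν 0 = PMF.pure x₀)
    (hν : ∀ s, ν (s + 1) = (ν s).bind fun x => P x (πhat s x))
    -- absorbing closed-loop kernel of the deterministic online policy π̂
    (κhat : ℕ → X → PMF X)
    (hκhat : ∀ s x, κhat s x = if x ∈ C then P x (πhat s x) else PMF.pure x)
    -- initial condition: Ψ(x₀, 0) > 1 - ε
    (hinit : 1 - ε < safeProb C κπ H 0 x₀)
    -- safety condition at every time and state
    (hsafe : ∀ t, t < H → ∀ x : X,
      safeProb C κπ H t x ≤ ∑ x' : X, ((κhat t x) x').toReal * safeProb C κπ H (t + 1) x') :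
    (∀ t, t ≤ H → 1 - ε ≤ ∑ x : X, ((ν t) x).toReal * safeProb C κπ H t x)
    ∧ (∀ t, t ≤ H →
        1 - ε ≤ ∑ f : Fin (H + 1) → X,
          if ∀ i : Fin (H + 1), t ≤ (i : ℕ) → f i ∈ C then
            ((traj (fun s x => if s < t then P x (πhat s x) else κπ s x) 0 H x₀) f).toReal
          else 0) := by
  -- kernel driven by πhat
  set K : ℕ → X → PMF X := fun s x => P x (πhat s x) with hK
  -- Part 1
  have part1 : ∀ t, t ≤ H → 1 - ε ≤ ∑ x : X, ((ν t) x).toReal * safeProb C κπ H t x := by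
    intro t
    induction t with
    | zero =>
        intro _
        have : ∑ x : X, ((ν 0) x).toReal * safeProb C κπ H 0 x = safeProb C κπ H 0 x₀ := by
          rw [hν0]
          rw [Finset.sum_eq_single x₀]
          · rw [PMF.pure_apply, if_pos rfl]; simp
          · intro y _ hy
            rw [PMF.pure_apply, if_neg hy]; simp
          · intro hx; exact absurd (Finset.mem_univ x₀) hx
        rw [this]
        exact hinit.le
    | succ t ih =>
        intro ht
        have htH : t < H := ht
        have step1 : ∀ x : X, ((ν t) x).toReal * safeProb C κπ H t x
            ≤ ∑ x' : X, ((ν t) x).toReal * ((K t x) x').toReal * safeProb C κπ H (t + 1) x' := by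
          intro x
          by_cases hx : x ∈ C
          · have h1 := hsafe t htH x
            have h2 : ∀ x', κhat t x x' = K t x x' := by
              intro x'; rw [hκhat, if_pos hx]
            calc ((ν t) x).toReal * safeProb C κπ H t x
                ≤ ((ν t) x).toReal * ∑ x' : X, ((κhat t x) x').toReal * safeProb C κπ H (t + 1) x' :=
                  mul_le_mul_of_nonneg_left h1 ENNReal.toReal_nonneg
              _ = ∑ x' : X, ((ν t) x).toReal * ((K t x) x').toReal * safeProb C κπ H (t + 1) x' := by
                  rw [Finset.mul_sum]
                  refine Finset.sum_congr rfl fun x' _ => ?_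
                  rw [h2 x', mul_assoc]
          · rw [safeProb_eq_zero C κπ H t x hx, mul_zero]
            apply Finset.sum_nonneg
            intro x' _
            have hnn : 0 ≤ safeProb C κπ H (t + 1) x' := by
              apply Finset.sum_nonneg
              intro f _
              split_ifs <;> positivity
            positivity
        calc 1 - ε ≤ ∑ x : X, ((ν t) x).toReal * safeProb C κπ H t x := ih (by omega)
          _ ≤ ∑ x : X, ∑ x' : X, ((ν t) x).toReal * ((K t x) x').toReal * safeProb C κπ H (t + 1) x' :=
              Finset.sum_le_sum fun x _ => step1 x
          _ = ∑ x' : X, (∑ x : X, ((ν t) x).toReal * ((K t x) x').toReal) * safeProb C κπ H (t + 1) x' := by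
              rw [Finset.sum_comm]
              simp_rw [Finset.sum_mul]
          _ = ∑ x' : X, ((ν (t + 1)) x').toReal * safeProb C κπ H (t + 1) x' := by
              refine Finset.sum_congr rfl fun x' _ => ?_
              congr 1
              rw [hν t]
              rw [PMF.bind_apply, tsum_fintype, ENNReal.toReal_sum]
              · refine Finset.sum_congr rfl fun x _ => ?_
                rw [ENNReal.toReal_mul]
              · intro x _
                exact ENNReal.mul_ne_top (PMF.apply_ne_top _ _) (PMF.apply_ne_top _ _)
  refine ⟨part1, ?_⟩
  intro t ht
  set κsw : ℕ → X → PMF X := fun s x => if s < t then P x (πhat s x) else κπ s x with hκsw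
  -- ν t = marg K 0 t x₀
  have hνmarg : ∀ s, ν s = marg K 0 s x₀ := by
    intro s
    induction s with
    | zero => rw [hν0]; rfl
    | succ s ihs =>
        rw [hν s, ihs, marg_snoc K s 0 x₀]
        simp only [Nat.zero_add]
        rfl
  -- the target sum as toReal of ENNReal sum
  have hsum : ∑ f : Fin (H + 1) → X,
      (if ∀ i : Fin (H + 1), t ≤ (i : ℕ) → f i ∈ C then ((traj κsw 0 H x₀) f).toReal else 0)
      = (∑ f : Fin (H + 1) → X,
          traj κsw 0 H x₀ f * (if ∀ i : Fin (H + 1), t ≤ (i : ℕ) → f i ∈ C then 1 else 0)).toReal := by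
    rw [ENNReal.toReal_sum]
    · refine Finset.sum_congr rfl fun f _ => ?_
      split_ifs with h
      · rw [mul_one]
      · rw [mul_zero, ENNReal.toReal_zero]
    · intro f _
      exact ENNReal.mul_ne_top (PMF.apply_ne_top _ _) (by split_ifs <;> simp)
  rw [hsum]
  rw [traj_split C κsw t H 0 x₀ ht]
  have hmargsw : marg κsw 0 t x₀ = ν t := by
    rw [hνmarg t]
    apply marg_congr
    intro s _ hs
    funext x
    show (if s < t then P x (πhat s x) else κπ s x) = P x (πhat s x)
    rw [if_pos (by omega)]
  have htraj : ∀ y, traj κsw (0 + t) (H - t) y = traj κπ t (H - t) y := by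
    intro y
    rw [Nat.zero_add]
    apply traj_congr
    intro s hs
    funext x
    show (if s < t then P x (πhat s x) else κπ s x) = κπ s x
    rw [if_neg (by omega)]
  have hinner : ∀ y, (∑ g : Fin (H - t + 1) → X,
      traj κsw (0 + t) (H - t) y g * (if ∀ i : Fin (H - t + 1), g i ∈ C then 1 else 0))
      = safeE C κπ H t y := by
    intro y
    rw [safeE]
    refine Finset.sum_congr rfl fun g _ => ?_
    rw [htraj y]
  calc (1 : ℝ) - ε ≤ ∑ x : X, ((ν t) x).toReal * safeProb C κπ H t x := part1 t ht
    _ = (∑ y : X, marg κsw 0 t x₀ y *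
          ∑ g : Fin (H - t + 1) → X,
            traj κsw (0 + t) (H - t) y g * (if ∀ i : Fin (H - t + 1), g i ∈ C then 1 else 0)).toReal := by
        rw [ENNReal.toReal_sum]
        · refine Finset.sum_congr rfl fun y _ => ?_
          rw [ENNReal.toReal_mul, hmargsw, hinner y, safeE_toReal]
        · intro y _
          rw [hinner y]
          exact ENNReal.mul_ne_top (PMF.apply_ne_top _ _) (safeE_ne_top C κπ H t y)
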